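/- Let $\Delta$ be Laplace($\lambda$) with density $\frac{\lambda}{2}e^{-\lambda|\delta|}$, and consider the Markov chain on $[0, S^{\max}]$ given by $S' = \min\{S + \alpha_c\Delta, S^{\max}\}$ if $\Delta \ge 0$ and $S' = \max\{S + \Delta/\alpha_d, 0\}$ if $\Delta < 0$. Then the distribution with CDF $F_S(s) = \frac{1 - \frac{1+\alpha}{2}e^{-(1/\alpha_c - \alpha_d)\lambda s/2}}{1 - \alpha e^{-(1/\alpha_c - \alpha_d)\lambda S^{\max}/2}}$ for $0 \le s < S^{\max}$ (with $F_S(s)=0$ for $s<0$ and $F_S(s)=1$ for $s \ge S^{\max}$), where $\alpha = \alpha_c\alpha_d$, is stationary: if $S$ has CDF $F_S$ and $\Delta$ is independent of $S$, then $S'$ also has CDF $F_S$. -/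

import Mathlib

set_option maxHeartbeats 1000000

open MeasureTheory Real

/-- Stationary CDF of the stored power under the greedy policy. -/
noncomputable def statCDF (l αc αd Smax : ℝ) (s : ℝ) : ℝ :=
  if s < 0 then 0
  else if s < Smax then
    (1 - (1 + αc * αd) / 2 * exp (-((1 / αc - αd) * l * s / 2))) /
      (1 - αc * αd * exp (-((1 / αc - αd) * l * Smax / 2)))
  else 1

lemma intExpMul (c : ℝ) (hc : c ≠ 0) (a b : ℝ) :
    ∫ x in a..b, exp (c * x) = (exp (c * b) - exp (c * a)) / c := by
  have H : ∀ x ∈ Set.uIcc a b, HasDerivAt (fun y => exp (c * y) / c) (exp (c * x)) x := by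
    intro x _
    have h := (((hasDerivAt_id x).const_mul c).exp).div_const c
    simp only [id_eq, mul_one] at h
    refine h.congr_deriv ?_
    field_simp
  rw [intervalIntegral.integral_eq_sub_of_hasDerivAt H
    (Continuous.intervalIntegrable (by continuity) _ _)]
  ring

lemma intExpIic (l : ℝ) (hl : 0 < l) (b : ℝ) :
    ∫ δ in Set.Iic b, (l / 2) * exp (l * δ) = (1 / 2) * exp (l * b) := by
  have hi : IntegrableOn (fun x => (l / 2) * exp (l * x)) (Set.Iic b) := by
    refine integrableOn_Iic_of_intervalIntegral_norm_bounded ((1 / 2) * exp (l * b)) b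
      (fun y : ℝ => (Continuous.intervalIntegrable
        (by continuity : Continuous fun x : ℝ => (l / 2) * exp (l * x)) y b).1)
      Filter.tendsto_id ?_
    filter_upwards [Filter.eventually_le_atBot b] with y hy
    have hnorm : ∀ x : ℝ, ‖(l / 2) * exp (l * x)‖ = (l / 2) * exp (l * x) := fun x =>
      norm_of_nonneg (by positivity)
    simp_rw [hnorm]
    rw [intervalIntegral.integral_const_mul, intExpMul l hl.ne' y b]
    have h1 := exp_pos (l * y)
    have h2 : l / 2 * ((exp (l * b) - exp (l * y)) / l) = (exp (l * b) - exp (l * y)) / 2 := by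
      field_simp
    rw [h2]; linarith
  have hderiv : ∀ x ∈ Set.Iic b,
      HasDerivAt (fun y => (1 / 2) * exp (l * y)) ((l / 2) * exp (l * x)) x := by
    intro x _
    have h := (((hasDerivAt_id x).const_mul l).exp).const_mul (1 / 2 : ℝ)
    simp only [id_eq, mul_one] at h
    refine h.congr_deriv ?_
    ring
  have htend : Filter.Tendsto (fun x => (1 / 2) * exp (l * x)) Filter.atBot (nhds 0) := by
    have h1 : Filter.Tendsto (fun x : ℝ => l * x) Filter.atBot Filter.atBot :=
      Filter.tendsto_id.const_mul_atBot hl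
    have h2 := tendsto_exp_atBot.comp h1
    have := h2.const_mul (1 / 2 : ℝ)
    simpa using this
  have := integral_Iic_of_hasDerivAt_of_tendsto' hderiv hi htend
  simpa using this

lemma intTwoExp (A B c1 c2 a b : ℝ) (h1 : c1 ≠ 0) (h2 : c2 ≠ 0) :
    ∫ x in a..b, (A * exp (c1 * x) - B * exp (c2 * x)) =
      A * ((exp (c1 * b) - exp (c1 * a)) / c1) - B * ((exp (c2 * b) - exp (c2 * a)) / c2) := by
  rw [intervalIntegral.integral_sub (Continuous.intervalIntegrable (by continuity) _ _)
    (Continuous.intervalIntegrable (by continuity) _ _),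
    intervalIntegral.integral_const_mul, intervalIntegral.integral_const_mul,
    intExpMul c1 h1, intExpMul c2 h2]

/-- The distribution with CDF `statCDF` is stationary for the storage Markov chain
driven by IID Laplace(λ) errors under the greedy policy: for `0 ≤ s < Sᵐᵃˣ`, the
one-step integral equation holds. -/
theorem stmt7 (l αc αd Smax : ℝ) (hl : 0 < l)
    (hαc : αc ∈ Set.Ioo (0 : ℝ) 1) (hαd : αd ∈ Set.Ioo (0 : ℝ) 1) (hS : 0 < Smax) :
    ∀ s, 0 ≤ s → s < Smax →
      (∫ δ in Set.Iic (-(αd * (Smax - s))), (l / 2) * exp (l * δ)) +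
      (∫ δ in (-(αd * (Smax - s)))..0,
        (l / 2) * exp (l * δ) * statCDF l αc αd Smax (s - δ / αd)) +
      (∫ δ in (0 : ℝ)..(s / αc),
        (l / 2) * exp (-(l * δ)) * statCDF l αc αd Smax (s - αc * δ)) =
      statCDF l αc αd Smax s := by
  obtain ⟨hαc0, hαc1⟩ := hαc
  obtain ⟨hαd0, hαd1⟩ := hαd
  intro s hs0 hsS
  have hinv : 1 < 1 / αc := by rw [lt_div_iff₀ hαc0]; linarith
  have hβ : 0 < (1 / αc - αd) * l := by
    apply mul_pos (by linarith) hl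
  -- denominator positive
  have hES1 : exp (-((1 / αc - αd) * l * Smax / 2)) ≤ 1 := by
    rw [exp_le_one_iff]
    nlinarith
  have hESpos := exp_pos (-((1 / αc - αd) * l * Smax / 2))
  have hD : (0 : ℝ) < 1 - αc * αd * exp (-((1 / αc - αd) * l * Smax / 2)) := by
    have hαα : 0 < αc * αd := mul_pos hαc0 hαd0
    have h1 : αc * αd * exp (-((1 / αc - αd) * l * Smax / 2)) ≤ αc * αd * 1 :=
      mul_le_mul_of_nonneg_left hES1 hαα.le
    nlinarith
  have hqpos : 0 < l + ((1 / αc - αd) * l / 2) / αd := by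
    have : 0 < ((1 / αc - αd) * l / 2) / αd := div_pos (by linarith) hαd0
    linarith
  have hq : l + ((1 / αc - αd) * l / 2) / αd ≠ 0 := hqpos.ne'
  have hr : -l + ((1 / αc - αd) * l / 2) * αc ≠ 0 := by
    have h : -l + ((1 / αc - αd) * l / 2) * αc = -(l * (1 + αc * αd) / 2) := by
      field_simp; ring
    rw [h]
    have : 0 < l * (1 + αc * αd) / 2 := by positivity
    linarith
  have hle2 : -(αd * (Smax - s)) ≤ 0 := by nlinarith
  have hle3 : (0 : ℝ) ≤ s / αc := div_nonneg hs0 hαc0.le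
  -- the Iic integral
  have h1 := intExpIic l hl (-(αd * (Smax - s)))
  -- middle integral : congruence
  have h2a : (∫ δ in (-(αd * (Smax - s)))..0,
      (l / 2) * exp (l * δ) * statCDF l αc αd Smax (s - δ / αd)) =
      ∫ δ in (-(αd * (Smax - s)))..0,
        ((l / 2) / (1 - αc * αd * exp (-((1 / αc - αd) * l * Smax / 2))) * exp (l * δ) -
         ((1 + αc * αd) / 2 * exp (-((1 / αc - αd) * l * s / 2)) * (l / 2) /
            (1 - αc * αd * exp (-((1 / αc - αd) * l * Smax / 2)))) *
           exp ((l + ((1 / αc - αd) * l / 2) / αd) * δ)) := by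
    rw [intervalIntegral.integral_of_le hle2, intervalIntegral.integral_of_le hle2]
    apply setIntegral_congr_fun measurableSet_Ioc
    intro δ hδ
    obtain ⟨hδ1, hδ2⟩ := hδ
    have hdiv : δ / αd ≤ 0 := div_nonpos_of_nonpos_of_nonneg hδ2 hαd0.le
    have hnn : ¬ (s - δ / αd < 0) := by push_neg; linarith
    have h' : -(Smax - s) < δ / αd := by rw [lt_div_iff₀ hαd0]; nlinarith
    have hlt : s - δ / αd < Smax := by linarith
    simp only [statCDF, if_neg hnn, if_pos hlt]
    rw [show -((1 / αc - αd) * l * (s - δ / αd) / 2) =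
        -((1 / αc - αd) * l * s / 2) + (((1 / αc - αd) * l / 2) / αd) * δ by
        field_simp; ring,
      exp_add,
      show (l + ((1 / αc - αd) * l / 2) / αd) * δ =
        l * δ + (((1 / αc - αd) * l / 2) / αd) * δ by ring,
      exp_add]
    revert hD
    generalize exp (l * δ) = e1
    generalize exp (-((1 / αc - αd) * l * s / 2)) = e2
    generalize exp ((1 / αc - αd) * l / 2 / αd * δ) = e3
    generalize exp (-((1 / αc - αd) * l * Smax / 2)) = e4
    intro hD
    field_simp
  -- last integral : congruence
  have h3a : (∫ δ in (0 : ℝ)..(s / αc),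
      (l / 2) * exp (-(l * δ)) * statCDF l αc αd Smax (s - αc * δ)) =
      ∫ δ in (0 : ℝ)..(s / αc),
        ((l / 2) / (1 - αc * αd * exp (-((1 / αc - αd) * l * Smax / 2))) * exp ((-l) * δ) -
         ((1 + αc * αd) / 2 * exp (-((1 / αc - αd) * l * s / 2)) * (l / 2) /
            (1 - αc * αd * exp (-((1 / αc - αd) * l * Smax / 2)))) *
           exp ((-l + ((1 / αc - αd) * l / 2) * αc) * δ)) := by
    rw [intervalIntegral.integral_of_le hle3, intervalIntegral.integral_of_le hle3]
    apply setIntegral_congr_fun measurableSet_Ioc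
    intro δ hδ
    obtain ⟨hδ1, hδ2⟩ := hδ
    have hmul : αc * δ ≤ s := by
      have := (le_div_iff₀ hαc0).1 hδ2
      nlinarith
    have hnn : ¬ (s - αc * δ < 0) := by push_neg; linarith
    have hlt : s - αc * δ < Smax := by nlinarith
    simp only [statCDF, if_neg hnn, if_pos hlt]
    rw [show -((1 / αc - αd) * l * (s - αc * δ) / 2) =
        -((1 / αc - αd) * l * s / 2) + (((1 / αc - αd) * l / 2) * αc) * δ by ring,
      exp_add,
      show (-l + ((1 / αc - αd) * l / 2) * αc) * δ =
        (-l) * δ + (((1 / αc - αd) * l / 2) * αc) * δ by ring,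
      exp_add,
      show -(l * δ) = (-l) * δ by ring]
    revert hD
    generalize exp ((-l) * δ) = e1
    generalize exp (-((1 / αc - αd) * l * s / 2)) = e2
    generalize exp ((1 / αc - αd) * l / 2 * αc * δ) = e3
    generalize exp (-((1 / αc - αd) * l * Smax / 2)) = e4
    intro hD
    field_simp
  rw [h1, h2a, h3a,
    intTwoExp _ _ _ _ _ _ hl.ne' hq,
    intTwoExp _ _ _ _ _ _ (neg_ne_zero.2 hl.ne') hr]
  simp only [statCDF, if_neg (not_lt.2 hs0), if_pos hsS]
  rw [show exp ((l + ((1 / αc - αd) * l / 2) / αd) * -(αd * (Smax - s))) =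
      exp (l * -(αd * (Smax - s))) * exp (-((1 / αc - αd) * l * Smax / 2)) *
        (exp (-((1 / αc - αd) * l * s / 2)))⁻¹ by
      rw [← exp_neg, ← exp_add, ← exp_add]; congr 1; field_simp; ring,
    show exp ((-l + ((1 / αc - αd) * l / 2) * αc) * (s / αc)) =
      exp ((-l) * (s / αc)) * (exp (-((1 / αc - αd) * l * s / 2)))⁻¹ by
      rw [← exp_neg, ← exp_add]; congr 1; field_simp]
  simp only [mul_zero, exp_zero]
  have hE1 := exp_ne_zero (-((1 / αc - αd) * l * s / 2))
  rw [show l + (1 / αc - αd) * l / 2 / αd = l * (1 + αc * αd) / (2 * (αc * αd)) by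
      field_simp; ring,
    show -l + (1 / αc - αd) * l / 2 * αc = -(l * (1 + αc * αd)) / 2 by
      field_simp; ring]
  revert hD hE1
  generalize exp (l * -(αd * (Smax - s))) = e1
  generalize exp (-((1 / αc - αd) * l * Smax / 2)) = e2
  generalize exp (-((1 / αc - αd) * l * s / 2)) = e3
  generalize exp ((-l) * (s / αc)) = e4
  intro hD hE1
  have h1pos : (0:ℝ) < 1 + αc * αd := by positivity
  field_simp [hq, hr, hD.ne', hl.ne', h1pos.ne']
  ring
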